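/- For any B ∈ ℂ^{n×k} with k ≤ n, the maximum of Re(tr(Pᴴ B)) over all P ∈ ℂ^{n×k} with Pᴴ P = I_k equals ‖B‖_tr, and the maximum is attained at any orthonormal polar factor P_* of B. -/

import Mathlib

open scoped ComplexOrder
open Matrix

/-- The tuple `f` rearranged into decreasing order; `sortedDesc f 0` is the largest entry. -/
noncomputable def sortedDesc {m : ℕ} (f : Fin m → ℝ) : Fin m → ℝ :=
  fun i => (f ∘ Tuple.sort f) i.rev

/-- The singular values of a complex matrix, in decreasing order. -/
noncomputable def sv {n k : ℕ} (B : Matrix (Fin n) (Fin k) ℂ) : Fin k → ℝ :=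
  sortedDesc fun i =>
    Real.sqrt ((Matrix.posSemidef_conjTranspose_mul_self B).isHermitian.eigenvalues i)

/-- The trace (nuclear) norm: the sum of the singular values. -/
noncomputable def trNorm {n k : ℕ} (B : Matrix (Fin n) (Fin k) ℂ) : ℝ := ∑ i, sv B i

/-- The Frobenius norm. -/
noncomputable def frobNorm {n k : ℕ} (A : Matrix (Fin n) (Fin k) ℂ) : ℝ :=
  Real.sqrt (∑ i, ∑ j, ‖A i j‖ ^ 2)

/-- `‖sin Θ(R(X), R(Y))‖_F` where `Θ` is the diagonal matrix of canonical angles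
`θ_i = arccos σ_i(Xᴴ Y)` between the column spaces of `X` and `Y`. -/
noncomputable def sinThetaF {n k : ℕ} (X Y : Matrix (Fin n) (Fin k) ℂ) : ℝ :=
  Real.sqrt (∑ i, Real.sin (Real.arccos (sv (Xᴴ * Y) i)) ^ 2)

/-- The smallest singular value. -/
noncomputable def smin {n k : ℕ} (B : Matrix (Fin n) (Fin k) ℂ) : ℝ := ⨅ i, sv B i

/-- The spectral norm (largest singular value). -/
noncomputable def s2norm {n k : ℕ} (B : Matrix (Fin n) (Fin k) ℂ) : ℝ := ⨆ i, sv B i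

/-- The orthonormal polar factor `B (Bᴴ B)^{-1/2}` (for `B` of full column rank). -/
noncomputable def polarFactor {n k : ℕ} (B : Matrix (Fin n) (Fin k) ℂ) :
    Matrix (Fin n) (Fin k) ℂ :=
  B * ((Matrix.posSemidef_conjTranspose_mul_self B).isHermitian.eigenvectorUnitary.1 *
    diagonal ((↑) ∘ Real.sqrt ∘ (Matrix.posSemidef_conjTranspose_mul_self B).isHermitian.eigenvalues) *
    (star (Matrix.posSemidef_conjTranspose_mul_self B).isHermitian.eigenvectorUnitary :
      Matrix (Fin k) (Fin k) ℂ))⁻¹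

lemma sum_sortedDesc {m : ℕ} (f : Fin m → ℝ) : ∑ i, sortedDesc f i = ∑ i, f i := by
  have h1 : ∑ i, sortedDesc f i = ∑ i, (f ∘ Tuple.sort f) i :=
    Fintype.sum_equiv Fin.revPerm _ _ (fun i => rfl)
  rw [h1]
  exact Equiv.sum_comp (Tuple.sort f) f

lemma re_sum_le_sqrt {m : ℕ} (a b : Fin m → ℂ) :
    (∑ j, star (a j) * b j).re ≤
      Real.sqrt (∑ j, Complex.normSq (a j)) * Real.sqrt (∑ j, Complex.normSq (b j)) := by
  let x : EuclideanSpace ℂ (Fin m) := (WithLp.equiv 2 _).symm a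
  let y : EuclideanSpace ℂ (Fin m) := (WithLp.equiv 2 _).symm b
  have h := re_inner_le_norm (𝕜 := ℂ) x y
  have hx : (inner ℂ x y : ℂ) = ∑ j, star (a j) * b j := by
    simp only [PiLp.inner_apply, RCLike.inner_apply]
    exact Finset.sum_congr rfl fun j _ => by
      rw [show x j = a j from rfl, show y j = b j from rfl, Complex.star_def, mul_comm]
  have hnx : ‖x‖ = Real.sqrt (∑ j, Complex.normSq (a j)) := by
    rw [EuclideanSpace.norm_eq]
    congr 1
    exact Finset.sum_congr rfl fun j _ => by
      rw [show x j = a j from rfl, Complex.sq_norm]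
  have hny : ‖y‖ = Real.sqrt (∑ j, Complex.normSq (b j)) := by
    rw [EuclideanSpace.norm_eq]
    congr 1
    exact Finset.sum_congr rfl fun j _ => by
      rw [show y j = b j from rfl, Complex.sq_norm]
  rw [hx, hnx, hny] at h
  exact h

/-- Eigenvalues of a Hermitian matrix, in decreasing order. -/
noncomputable def eigsDesc {n : ℕ} {H : Matrix (Fin n) (Fin n) ℂ} (hH : H.IsHermitian) :
    Fin n → ℝ :=
  sortedDesc hH.eigenvalues

open scoped MatrixOrder in
lemma trace_eq_sum_sqrt_of_sq_eq {k : ℕ} (A Λ : Matrix (Fin k) (Fin k) ℂ) (hA : A.PosSemidef)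
    (hΛ : Λ.PosSemidef) (h : Λ ^ 2 = A) :
    Matrix.trace Λ = ∑ i, ((Real.sqrt (hA.1.eigenvalues i) : ℝ) : ℂ) := by
  have hs : Λ = CFC.sqrt A :=
    ((CFC.sqrt_eq_iff A Λ hA.nonneg hΛ.nonneg).mpr (by rw [← sq]; exact h)).symm
  rw [hs, CFC.sqrt_eq_cfc, cfc_nnreal_eq_real _ A hA.nonneg, hA.1.cfc_eq, IsHermitian.cfc,
    Unitary.conjStarAlgAut_apply, Matrix.trace_mul_comm, ← Matrix.mul_assoc,
    Unitary.coe_star_mul_self, Matrix.one_mul, Matrix.trace_diagonal]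
  refine Finset.sum_congr rfl fun i _ => ?_
  simp [Real.coe_toNNReal', max_eq_left (hA.eigenvalues_nonneg i)]

theorem max_re_trace_eq_trNorm {n k : ℕ} (hkn : k ≤ n) (B : Matrix (Fin n) (Fin k) ℂ) :
    IsGreatest {x : ℝ | ∃ P : Matrix (Fin n) (Fin k) ℂ,
        Pᴴ * P = 1 ∧ x = (Matrix.trace (Pᴴ * B)).re} (trNorm B) ∧
    ∀ (Pstar : Matrix (Fin n) (Fin k) ℂ) (Λ : Matrix (Fin k) (Fin k) ℂ),
      Pstarᴴ * Pstar = 1 → Λ.PosSemidef → B = Pstar * Λ →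
      (Matrix.trace (Pstarᴴ * B)).re = trNorm B := by
  classical
  have hB := Matrix.posSemidef_conjTranspose_mul_self B
  have hH : (Bᴴ * B).IsHermitian := hB.isHermitian
  set μ : Fin k → ℝ := hH.eigenvalues with hμdef
  have hμ0 : ∀ i, 0 ≤ μ i := fun i => hB.eigenvalues_nonneg i
  set V : Matrix (Fin k) (Fin k) ℂ := (hH.eigenvectorUnitary : Matrix (Fin k) (Fin k) ℂ)
    with hVdef
  have hV1 : Vᴴ * V = 1 := by
    rw [← Matrix.star_eq_conjTranspose]
    exact Matrix.mem_unitaryGroup_iff'.mp hH.eigenvectorUnitary.2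
  have hV2 : V * Vᴴ = 1 := by
    rw [← Matrix.star_eq_conjTranspose]
    exact Matrix.mem_unitaryGroup_iff.mp hH.eigenvectorUnitary.2
  set D : Matrix (Fin n) (Fin k) ℂ := B * V with hDdef
  -- trace norm = sum of sqrt of eigenvalues
  have htr : trNorm B = ∑ i, Real.sqrt (μ i) := sum_sortedDesc _
  -- Gram matrix of the columns of D is diagonal
  have hdiag : Dᴴ * D = Matrix.diagonal (RCLike.ofReal ∘ μ) := by
    have h0 : star V * (Bᴴ * B) * V = Matrix.diagonal (RCLike.ofReal ∘ μ) := by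
      have := hH.conjStarAlgAut_star_eigenvectorUnitary
      rw [Unitary.conjStarAlgAut_star_apply] at this
      exact this
    rw [Matrix.star_eq_conjTranspose] at h0
    rw [hDdef, Matrix.conjTranspose_mul, ← h0]
    simp only [Matrix.mul_assoc]
  have hcolD : ∀ i, ∑ j, Complex.normSq (D j i) = μ i := by
    intro i
    have h := congrFun (congrFun hdiag i) i
    rw [Matrix.mul_apply] at h
    simp only [Matrix.conjTranspose_apply, Matrix.diagonal_apply_eq, Function.comp_apply] at h
    have h' : ∑ j, star (D j i) * D j i = ((μ i : ℝ) : ℂ) := h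
    have h2 : (↑(∑ j, Complex.normSq (D j i)) : ℂ) = ((μ i : ℝ) : ℂ) := by
      push_cast
      rw [← h']
      exact Finset.sum_congr rfl fun j _ => by
        rw [Complex.normSq_eq_conj_mul_self, Complex.star_def]
    exact_mod_cast h2
  -- the key trace formula
  have key : ∀ P : Matrix (Fin n) (Fin k) ℂ,
      (Matrix.trace (Pᴴ * B)).re = ∑ i, (∑ j, star ((P * V) j i) * (D j i)).re := by
    intro P
    have h1 : Matrix.trace ((P * V)ᴴ * D) = Matrix.trace (Pᴴ * B) := by
      rw [Matrix.trace_mul_comm]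
      have h2 : D * (P * V)ᴴ = B * Pᴴ := by
        rw [Matrix.conjTranspose_mul, hDdef]
        calc B * V * (Vᴴ * Pᴴ) = B * (V * Vᴴ) * Pᴴ := by simp only [Matrix.mul_assoc]
          _ = B * Pᴴ := by rw [hV2, Matrix.mul_one]
      rw [h2, Matrix.trace_mul_comm]
    rw [← h1, Matrix.trace, Complex.re_sum]
    refine Finset.sum_congr rfl fun i _ => ?_
    simp only [Matrix.diag_apply, Matrix.mul_apply, Matrix.conjTranspose_apply]
  -- columns of P*V are unit vectors whenever Pᴴ*P = 1
  have hcolP : ∀ P : Matrix (Fin n) (Fin k) ℂ, Pᴴ * P = 1 →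
      ∀ i, ∑ j, Complex.normSq ((P * V) j i) = 1 := by
    intro P hP i
    have h0 : (P * V)ᴴ * (P * V) = 1 := by
      rw [Matrix.conjTranspose_mul]
      calc Vᴴ * Pᴴ * (P * V) = Vᴴ * (Pᴴ * P) * V := by simp only [Matrix.mul_assoc]
        _ = 1 := by rw [hP, Matrix.mul_one, hV1]
    have h := congrFun (congrFun h0 i) i
    rw [Matrix.mul_apply] at h
    simp only [Matrix.conjTranspose_apply, Matrix.one_apply_eq] at h
    have h2 : (↑(∑ j, Complex.normSq ((P * V) j i)) : ℂ) = 1 := by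
      push_cast
      rw [← h]
      exact Finset.sum_congr rfl fun j _ => by
        rw [Complex.normSq_eq_conj_mul_self, Complex.star_def]
    exact_mod_cast h2
  -- upper bound
  have hub : ∀ P : Matrix (Fin n) (Fin k) ℂ, Pᴴ * P = 1 →
      (Matrix.trace (Pᴴ * B)).re ≤ trNorm B := by
    intro P hP
    rw [key P, htr]
    refine Finset.sum_le_sum fun i _ => ?_
    calc (∑ j, star ((P * V) j i) * (D j i)).re
        ≤ Real.sqrt (∑ j, Complex.normSq ((P * V) j i)) *
            Real.sqrt (∑ j, Complex.normSq (D j i)) := re_sum_le_sqrt _ _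
      _ = Real.sqrt (μ i) := by rw [hcolP P hP i, hcolD i, Real.sqrt_one, one_mul]
  -- columns of D with zero eigenvalue vanish
  have hDzero : ∀ i, μ i = 0 → ∀ j, D j i = 0 := by
    intro i hi j
    have h := hcolD i
    rw [hi] at h
    have hz := (Finset.sum_eq_zero_iff_of_nonneg
      (fun j _ => Complex.normSq_nonneg (D j i))).mp h j (Finset.mem_univ j)
    exact Complex.normSq_eq_zero.mp hz
  -- the diagonal sum identity for columns of D
  have hsumD : ∀ i i', ∑ j, star (D j i) * D j i' = (if i = i' then ((μ i : ℝ) : ℂ) else 0) := by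
    intro i i'
    have h := congrFun (congrFun hdiag i) i'
    rw [Matrix.mul_apply] at h
    simp only [Matrix.conjTranspose_apply, Matrix.diagonal_apply, Function.comp_apply] at h
    rw [h]
    split <;> rfl
  -- existence of a maximizer
  have hex : ∃ P : Matrix (Fin n) (Fin k) ℂ, Pᴴ * P = 1 ∧
      trNorm B = (Matrix.trace (Pᴴ * B)).re := by
    let u : Fin k → EuclideanSpace ℂ (Fin n) := fun i =>
      (((Real.sqrt (μ i) : ℝ) : ℂ))⁻¹ • (WithLp.equiv 2 _).symm (fun j => D j i)
    have hu_apply : ∀ i j, u i j = ((Real.sqrt (μ i) : ℂ))⁻¹ * D j i := fun i j => rfl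
    have hinner : ∀ i i', (inner ℂ (u i) (u i') : ℂ) =
        ((Real.sqrt (μ i) : ℂ))⁻¹ * ((Real.sqrt (μ i') : ℂ))⁻¹ *
          (if i = i' then ((μ i : ℝ) : ℂ) else 0) := by
      intro i i'
      have h1 : (inner ℂ (u i) (u i') : ℂ) =
          ((Real.sqrt (μ i) : ℂ))⁻¹ * ((Real.sqrt (μ i') : ℂ))⁻¹ *
            ∑ j, star (D j i) * D j i' := by
        simp only [PiLp.inner_apply, RCLike.inner_apply]
        rw [Finset.mul_sum]
        refine Finset.sum_congr rfl fun j _ => ?_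
        simp only [hu_apply, Complex.star_def, _root_.map_mul, map_inv₀, Complex.conj_ofReal]
        ring
      rw [h1, hsumD i i']
    let v : Fin n → EuclideanSpace ℂ (Fin n) := fun j =>
      if h : (j : ℕ) < k then u ⟨(j : ℕ), h⟩ else 0
    let s : Set (Fin n) := {j | ∃ h : (j : ℕ) < k, μ ⟨(j : ℕ), h⟩ ≠ 0}
    have hv_mem : ∀ (j : Fin n) (h : (j : ℕ) < k), v j = u ⟨(j : ℕ), h⟩ := by
      intro j h
      simp only [v, dif_pos h]
    have horth : Orthonormal ℂ (s.restrict v) := by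
      rw [orthonormal_iff_ite]
      rintro ⟨j, hj⟩ ⟨j', hj'⟩
      obtain ⟨hlt, hne⟩ := hj
      obtain ⟨hlt', hne'⟩ := hj'
      show inner ℂ (v j) (v j') = _
      rw [hv_mem j hlt, hv_mem j' hlt', hinner]
      by_cases hjj : j = j'
      · subst hjj
        have hfin : (⟨(j : ℕ), hlt⟩ : Fin k) = ⟨(j : ℕ), hlt'⟩ := rfl
        rw [if_pos hfin, if_pos (Subtype.ext rfl)]
        have hreal : (Real.sqrt (μ ⟨(j : ℕ), hlt⟩))⁻¹ * (Real.sqrt (μ ⟨(j : ℕ), hlt'⟩))⁻¹ *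
            μ ⟨(j : ℕ), hlt⟩ = 1 := by
          rw [show (⟨(j : ℕ), hlt'⟩ : Fin k) = ⟨(j : ℕ), hlt⟩ from rfl, ← mul_inv,
            Real.mul_self_sqrt (hμ0 _)]
          exact inv_mul_cancel₀ hne
        exact_mod_cast hreal
      · have h1 : (⟨(j : ℕ), hlt⟩ : Fin k) ≠ ⟨(j' : ℕ), hlt'⟩ := fun hcon =>
          hjj (Fin.val_injective (Fin.mk_eq_mk.mp hcon))
        rw [if_neg h1, mul_zero,
          if_neg (fun hcon => hjj (congrArg Subtype.val hcon))]
    obtain ⟨b, hb⟩ := horth.exists_orthonormalBasis_extension_of_card_eq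
      (by simp [finrank_euclideanSpace])
    let C : Matrix (Fin n) (Fin k) ℂ := fun j i => b (Fin.castLE hkn i) j
    have hin : ∀ i i', (inner ℂ (b (Fin.castLE hkn i)) (b (Fin.castLE hkn i')) : ℂ) =
        ∑ j, star (C j i) * C j i' := by
      intro i i'
      simp only [PiLp.inner_apply, RCLike.inner_apply]
      exact Finset.sum_congr rfl fun j _ => by rw [mul_comm]; rfl
    have hC : Cᴴ * C = 1 := by
      ext i i'
      rw [Matrix.mul_apply]
      simp only [Matrix.conjTranspose_apply]
      have hbo := orthonormal_iff_ite.mp b.orthonormal (Fin.castLE hkn i) (Fin.castLE hkn i')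
      rw [hin] at hbo
      rw [hbo, Matrix.one_apply]
      simp [Fin.castLE_inj]
    refine ⟨C * Vᴴ, ?_, ?_⟩
    · rw [Matrix.conjTranspose_mul, Matrix.conjTranspose_conjTranspose]
      calc V * Cᴴ * (C * Vᴴ) = V * (Cᴴ * C) * Vᴴ := by simp only [Matrix.mul_assoc]
        _ = 1 := by rw [hC, Matrix.mul_one, hV2]
    · rw [key, htr]
      have hCV : C * Vᴴ * V = C := by rw [Matrix.mul_assoc, hV1, Matrix.mul_one]
      rw [hCV]
      refine Finset.sum_congr rfl fun i _ => ?_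
      by_cases hi : μ i = 0
      · have : ∀ j, star (C j i) * D j i = 0 := fun j => by
          rw [hDzero i hi j, mul_zero]
        simp only [this, Finset.sum_const_zero, Complex.zero_re, hi, Real.sqrt_zero]
      · -- b (castLE i) = u i
        have hmem : (Fin.castLE hkn i) ∈ s := ⟨by simpa using i.isLt, by simpa using hi⟩
        have hbv := hb (Fin.castLE hkn i) hmem
        have hueq : v (Fin.castLE hkn i) = u i := by
          rw [hv_mem _ (by simpa using i.isLt)]
          congr 1
        have hCu : ∀ j, C j i = ((Real.sqrt (μ i) : ℂ))⁻¹ * D j i := by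
          intro j
          show b (Fin.castLE hkn i) j = _
          rw [hbv, hueq, hu_apply]
        have hsum : ∑ j, star (C j i) * D j i = ((Real.sqrt (μ i) : ℂ))⁻¹ * ((μ i : ℝ) : ℂ) := by
          rw [show ((Real.sqrt (μ i) : ℂ))⁻¹ * ((μ i : ℝ) : ℂ)
              = ((Real.sqrt (μ i) : ℂ))⁻¹ * ∑ j, star (D j i) * D j i by
            rw [hsumD i i, if_pos rfl]]
          rw [Finset.mul_sum]
          refine Finset.sum_congr rfl fun j _ => ?_
          rw [hCu j, star_mul', star_inv₀,
            show star ((Real.sqrt (μ i) : ℝ) : ℂ) = ((Real.sqrt (μ i) : ℝ) : ℂ) from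
              Complex.conj_ofReal _]
          ring
        rw [hsum]
        have : (((Real.sqrt (μ i))⁻¹ * μ i : ℝ) : ℂ).re = (Real.sqrt (μ i))⁻¹ * μ i :=
          Complex.ofReal_re _
        rw [show ((Real.sqrt (μ i) : ℂ))⁻¹ * ((μ i : ℝ) : ℂ)
            = (((Real.sqrt (μ i))⁻¹ * μ i : ℝ) : ℂ) by push_cast; ring, Complex.ofReal_re,
          inv_mul_eq_div, Real.div_sqrt]
  -- part 3 : polar factor attains the maximum
  have hpolar : ∀ (Pstar : Matrix (Fin n) (Fin k) ℂ) (Λ : Matrix (Fin k) (Fin k) ℂ),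
      Pstarᴴ * Pstar = 1 → Λ.PosSemidef → B = Pstar * Λ →
      (Matrix.trace (Pstarᴴ * B)).re = trNorm B := by
    intro Pstar Λ hP hΛ hBP
    have hΛ2 : Λ ^ 2 = Bᴴ * B := by
      rw [hBP, Matrix.conjTranspose_mul, pow_two]
      calc Λ * Λ = Λᴴ * (Pstarᴴ * Pstar) * Λ := by
            rw [hP, Matrix.mul_one, hΛ.isHermitian.eq]
        _ = Λᴴ * Pstarᴴ * (Pstar * Λ) := by simp only [Matrix.mul_assoc]
    have hsqrt_tr := trace_eq_sum_sqrt_of_sq_eq _ Λ hB hΛ hΛ2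
    have htrΛ : Matrix.trace (Pstarᴴ * B) = Matrix.trace Λ := by
      rw [hBP, ← Matrix.mul_assoc, hP, Matrix.one_mul]
    rw [htrΛ, hsqrt_tr, Complex.re_sum, htr]
    exact Finset.sum_congr rfl fun i _ => by rw [Complex.ofReal_re]
  exact ⟨⟨hex.elim fun P hP => ⟨P, hP.1, hP.2⟩, fun x hx => by
    obtain ⟨P, hP, rfl⟩ := hx
    exact hub P hP⟩, hpolar⟩
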